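/- Let P be a convex polygon with valid boundary mapping f : ∂P → R^d such that every pair of vertices is critical under f. Then the unique map g : P → R^d extending f affinely is an isometry of P onto a congruent polygon: ‖g(p)−g(q)‖ = ‖p−q‖ for all p, q ∈ P, and g agrees with f on ∂P when f maps edges affinely-isometrically. -/

import Mathlib

open Set
open scoped RealInnerProductSpace

lemma polarization_aux {E : Type*} [NormedAddCommGroup E] [InnerProductSpace ℝ E]
    (a b c d : E) :
    ⟪a - b, c - d⟫ = (dist a d ^ 2 + dist b c ^ 2 - dist a c ^ 2 - dist b d ^ 2) / 2 := by
  simp only [dist_eq_norm, ← real_inner_self_eq_norm_sq]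
  simp only [inner_sub_left, inner_sub_right]
  rw [real_inner_comm d a, real_inner_comm c b, real_inner_comm c a, real_inner_comm d b]
  ring

/-- if every pair of vertices of a convex polygon is critical under a
valid boundary mapping f that maps edges affinely-isometrically, then the unique affine
extension g of f on the vertices is an isometry of the polygon P = convexHull(V) onto a
congruent polygon, and g agrees with f on the boundary. -/
theorem convex_polygon_rigid {d n : ℕ} (hn : 3 ≤ n)
    (V : ZMod n → EuclideanSpace ℝ (Fin 2)) (hinj : Function.Injective V)
    (hncol : ¬ Collinear ℝ (Set.range V))
    (f : EuclideanSpace ℝ (Fin 2) → EuclideanSpace ℝ (Fin d))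
    -- all vertex pairs are critical under f
    (hcrit : ∀ i j : ZMod n, dist (f (V i)) (f (V j)) = dist (V i) (V j))
    -- f maps each edge affinely-isometrically onto the segment between vertex images
    (haff : ∀ i : ZMod n, ∀ t ∈ Set.Icc (0 : ℝ) 1,
        f (V i + t • (V (i + 1) - V i)) = f (V i) + t • (f (V (i + 1)) - f (V i))) :
    ∃ g : EuclideanSpace ℝ (Fin 2) →ᵃ[ℝ] EuclideanSpace ℝ (Fin d),
      (∀ i : ZMod n, g (V i) = f (V i)) ∧
      (∀ x ∈ ⋃ i : ZMod n, segment ℝ (V i) (V (i + 1)), g x = f x) ∧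
      (∀ p ∈ convexHull ℝ (Set.range V), ∀ q ∈ convexHull ℝ (Set.range V),
          dist (g p) (g q) = dist p q) ∧
      ∀ g' : EuclideanSpace ℝ (Fin 2) →ᵃ[ℝ] EuclideanSpace ℝ (Fin d),
        (∀ i : ZMod n, g' (V i) = f (V i)) →
        ∀ p ∈ convexHull ℝ (Set.range V), g' p = g p := by
  classical
  -- inner products of vertex differences are preserved
  have hpair : ∀ i j k l : ZMod n,
      ⟪f (V i) - f (V j), f (V k) - f (V l)⟫ = ⟪V i - V j, V k - V l⟫ := by
    intro i j k l
    rw [polarization_aux, polarization_aux, hcrit, hcrit, hcrit, hcrit]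
  -- the span of the differences from V 0 is everything
  have hvs : vectorSpan ℝ (Set.range V) = ⊤ := by
    have h2 : 2 ≤ Module.finrank ℝ (vectorSpan ℝ (Set.range V)) := by
      by_contra h
      exact hncol (collinear_iff_finrank_le_one.2 (by omega))
    have hle : Module.finrank ℝ (vectorSpan ℝ (Set.range V)) ≤ 2 := by
      simpa using (Submodule.finrank_le (vectorSpan ℝ (Set.range V)))
    exact Submodule.eq_top_of_finrank_eq (by simp; omega)
  have hspan : Submodule.span ℝ (Set.range (fun i => V i - V 0)) = ⊤ := by
    have h := vectorSpan_eq_span_vsub_set_right ℝ (Set.mem_range_self (f := V) 0)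
    have himg : ((· -ᵥ V 0) '' Set.range V) = Set.range fun i => V i - V 0 := by
      ext x
      simp only [vsub_eq_sub, Set.mem_image, Set.mem_range]
      constructor
      · rintro ⟨y, ⟨i, rfl⟩, rfl⟩; exact ⟨i, rfl⟩
      · rintro ⟨i, rfl⟩; exact ⟨V i, ⟨i, rfl⟩, rfl⟩
    rw [himg] at h
    rw [← h, hvs]
  obtain ⟨b, hb_sub, hb_span, hb_li⟩ :=
    exists_linearIndependent ℝ (Set.range (fun i => V i - V 0))
  have hb_top : Submodule.span ℝ b = ⊤ := by rw [hb_span, hspan]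
  let B : Module.Basis b ℝ (EuclideanSpace ℝ (Fin 2)) :=
    Module.Basis.mk hb_li (by rw [Subtype.range_coe, hb_top])
  have hidx : ∀ x : b, ∃ i : ZMod n, V i - V 0 = (x : EuclideanSpace ℝ (Fin 2)) := by
    intro x
    obtain ⟨i, hi⟩ := hb_sub x.2
    exact ⟨i, hi⟩
  choose idx hidx_spec using hidx
  let L : EuclideanSpace ℝ (Fin 2) →ₗ[ℝ] EuclideanSpace ℝ (Fin d) :=
    B.constr ℝ (fun x => f (V (idx x)) - f (V 0))
  have hLbasis : ∀ x : b, L (x : EuclideanSpace ℝ (Fin 2)) = f (V (idx x)) - f (V 0) := by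
    intro x
    have := B.constr_basis ℝ (fun x => f (V (idx x)) - f (V 0)) x
    rw [show (B x : EuclideanSpace ℝ (Fin 2)) = (x : EuclideanSpace ℝ (Fin 2)) from by
      simp [B, Module.Basis.mk_apply]] at this
    exact this
  -- inner products against vertex-difference images are preserved
  have hLf : ∀ (i : ZMod n) (y : EuclideanSpace ℝ (Fin 2)),
      ⟪f (V i) - f (V 0), L y⟫ = ⟪V i - V 0, y⟫ := by
    intro i
    suffices h : ((innerSL ℝ (f (V i) - f (V 0))).toLinearMap.comp L) =
        (innerSL ℝ (V i - V 0)).toLinearMap by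
      intro y; exact congrFun (congrArg (↑·) h) y
    apply B.ext
    intro x
    have hx : (B x : EuclideanSpace ℝ (Fin 2)) = (x : EuclideanSpace ℝ (Fin 2)) := by
      simp [B, Module.Basis.mk_apply]
    simp only [LinearMap.comp_apply, ContinuousLinearMap.coe_coe, innerSL_apply_apply, hx, hLbasis]
    rw [← hidx_spec x]
    exact hpair i 0 (idx x) 0
  have hLL : ∀ y z : EuclideanSpace ℝ (Fin 2), ⟪L y, L z⟫ = ⟪y, z⟫ := by
    intro y z
    suffices h : ∀ z, ((innerSL ℝ (L z)).toLinearMap.comp L) = (innerSL ℝ z).toLinearMap by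
      have hz := congrFun (congrArg (fun (m : _ →ₗ[ℝ] ℝ) => (m : _ → ℝ)) (h z)) y
      simp only [LinearMap.comp_apply, ContinuousLinearMap.coe_coe, innerSL_apply_apply] at hz
      rw [real_inner_comm (L z) (L y), real_inner_comm z y]
      exact hz
    intro z
    apply B.ext
    intro x
    have hx : (B x : EuclideanSpace ℝ (Fin 2)) = (x : EuclideanSpace ℝ (Fin 2)) := by
      simp [B, Module.Basis.mk_apply]
    simp only [LinearMap.comp_apply, ContinuousLinearMap.coe_coe, innerSL_apply_apply, hx, hLbasis]
    rw [real_inner_comm, hLf (idx x) z, ← hidx_spec x, real_inner_comm]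
  -- L sends every vertex difference to the corresponding image difference
  have hLi : ∀ i : ZMod n, L (V i - V 0) = f (V i) - f (V 0) := by
    intro i
    have h1 : ⟪L (V i - V 0), L (V i - V 0)⟫ = ⟪V i - V 0, V i - V 0⟫ :=
      hLL (V i - V 0) (V i - V 0)
    have h2 : ⟪f (V i) - f (V 0), L (V i - V 0)⟫ = ⟪V i - V 0, V i - V 0⟫ := hLf i (V i - V 0)
    have h3 : ⟪f (V i) - f (V 0), f (V i) - f (V 0)⟫ = ⟪V i - V 0, V i - V 0⟫ := hpair i 0 i 0
    have h4 : ⟪L (V i - V 0), f (V i) - f (V 0)⟫ = ⟪V i - V 0, V i - V 0⟫ := by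
      rw [real_inner_comm]; exact h2
    have key : ⟪L (V i - V 0) - (f (V i) - f (V 0)), L (V i - V 0) - (f (V i) - f (V 0))⟫
        = (0 : ℝ) := by
      rw [real_inner_sub_sub_self, h1, h4, h3]
      ring
    exact sub_eq_zero.mp (inner_self_eq_zero.mp key)
  -- the affine extension
  let g : EuclideanSpace ℝ (Fin 2) →ᵃ[ℝ] EuclideanSpace ℝ (Fin d) :=
    AffineMap.mk' (fun x => L (x - V 0) + f (V 0)) L (V 0)
      (fun p => by simp [vsub_eq_sub, vadd_eq_add])
  have hg_apply : ∀ x, g x = L (x - V 0) + f (V 0) := fun x => rfl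
  have hgV : ∀ i : ZMod n, g (V i) = f (V i) := by
    intro i
    rw [hg_apply, hLi]
    abel
  have hLnorm : ∀ v : EuclideanSpace ℝ (Fin 2), ‖L v‖ = ‖v‖ :=
    (L.isometryOfInner hLL).norm_map
  refine ⟨g, hgV, ?_, ?_, ?_⟩
  · intro x hx
    simp only [Set.mem_iUnion] at hx
    obtain ⟨i, hxi⟩ := hx
    rw [segment_eq_image'] at hxi
    obtain ⟨t, ht, rfl⟩ := hxi
    have hL2 : L (V (i + 1) - V i) = f (V (i + 1)) - f (V i) := by
      have h0 : V (i + 1) - V i = (V (i + 1) - V 0) - (V i - V 0) := by module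
      rw [h0, map_sub, hLi, hLi]; abel
    rw [haff i t ht, hg_apply]
    have h1 : V i + t • (V (i + 1) - V i) - V 0
        = (V i - V 0) + t • (V (i + 1) - V i) := by
      module
    rw [h1, map_add, map_smul, hLi, hL2]
    module
  · intro p _ q _
    rw [dist_eq_norm, dist_eq_norm, hg_apply, hg_apply]
    have h1 : L (p - V 0) + f (V 0) - (L (q - V 0) + f (V 0)) = L (p - q) := by
      have h2 : L (p - q) = L (p - V 0) - L (q - V 0) := by rw [← map_sub]; congr 1; module
      rw [h2]; abel
    rw [h1, hLnorm]
  · intro g' hg' p _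
    have hlin : g'.linear = g.linear := by
      apply LinearMap.ext_on hspan
      rintro x ⟨i, rfl⟩
      have e1 : g'.linear (V i - V 0) = g' (V i) - g' (V 0) := by
        simpa [vsub_eq_sub] using (g'.linearMap_vsub (V i) (V 0))
      have e2 : g.linear (V i - V 0) = g (V i) - g (V 0) := by
        simpa [vsub_eq_sub] using (g.linearMap_vsub (V i) (V 0))
      rw [e1, e2, hg' i, hg' 0, hgV i, hgV 0]
    have h1 : g' p = g'.linear (p - V 0) + g' (V 0) := by
      simpa [vsub_eq_sub, vadd_eq_add] using (g'.map_vadd (V 0) (p - V 0))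
    have h2 : g p = g.linear (p - V 0) + g (V 0) := by
      simpa [vsub_eq_sub, vadd_eq_add] using (g.map_vadd (V 0) (p - V 0))
    rw [h1, h2, hlin, hg' 0, hgV 0]
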